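/- arXiv:1912.06928 — 4 statements merged into one kernel-verified Lean document; each statement's English description precedes it below -/
import Mathlib

section
/- For every n ≥ 1, the n-th moment of the Pseudo-Lindley distribution equals m_n = n!(β + n)/(θ^n β); that is, ∫_0^∞ x^n · θ(β - 1 + θx)e^{-θx}/β dx = n!(β + n)/(θ^n β). -/
open Real MeasureTheory

lemma pl_integrable (θ : ℝ) (hθ : 0 < θ) (k : ℕ) :
    IntegrableOn (fun x : ℝ => x ^ k * Real.exp (-θ * x)) (Set.Ioi 0) := by
  have h := integrableOn_rpow_mul_exp_neg_mul_rpow (p := 1) (s := (k : ℝ)) (b := θ)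
    (by exact_mod_cast neg_one_lt_zero.trans_le (Nat.cast_nonneg k)) one_pos hθ
  refine h.congr_fun (fun x hx => ?_) measurableSet_Ioi
  beta_reduce
  rw [Real.rpow_natCast, Real.rpow_one]

lemma pl_integral (θ : ℝ) (hθ : 0 < θ) (k : ℕ) :
    ∫ x in Set.Ioi (0:ℝ), x ^ k * Real.exp (-θ * x)
      = (Nat.factorial k : ℝ) / θ ^ (k + 1) := by
  have h := integral_rpow_mul_exp_neg_mul_Ioi (a := (k : ℝ) + 1) (r := θ) (by positivity) hθ
  rw [show ((k : ℝ) + 1 - 1) = (k : ℝ) by ring] at h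
  have h2 : ∫ x in Set.Ioi (0:ℝ), x ^ k * Real.exp (-θ * x)
      = ∫ x in Set.Ioi (0:ℝ), x ^ (k : ℝ) * Real.exp (-(θ * x)) := by
    refine setIntegral_congr_fun measurableSet_Ioi (fun x hx => ?_)
    rw [Real.rpow_natCast, neg_mul]
  rw [h2, h, Real.Gamma_nat_eq_factorial,
    show ((k:ℝ)+1) = ((k+1 : ℕ):ℝ) by push_cast; ring,
    Real.rpow_natCast, div_pow, one_pow]
  ring

theorem pseudoLindley_moments (θ β : ℝ) (hθ : 0 < θ) (hβ : 1 < β) (n : ℕ) (hn : 1 ≤ n) :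
    ∫ x in Set.Ioi (0 : ℝ), x ^ n * (θ * (β - 1 + θ * x) * Real.exp (-θ * x) / β)
      = (Nat.factorial n : ℝ) * (β + n) / (θ ^ n * β) := by
  have hβ0 : (0:ℝ) < β := by linarith
  have key : ∀ x ∈ Set.Ioi (0:ℝ),
      x ^ n * (θ * (β - 1 + θ * x) * Real.exp (-θ * x) / β)
        = (θ * (β - 1) / β) * (x ^ n * Real.exp (-θ * x))
          + (θ ^ 2 / β) * (x ^ (n + 1) * Real.exp (-θ * x)) := by
    intro x _
    ring
  rw [setIntegral_congr_fun measurableSet_Ioi key, integral_add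
    ((pl_integrable θ hθ n).const_mul _) ((pl_integrable θ hθ (n+1)).const_mul _),
    integral_const_mul, integral_const_mul, pl_integral θ hθ n, pl_integral θ hθ (n+1),
    Nat.factorial_succ]
  push_cast
  field_simp
  ring
end

section
/- The Pseudo-Lindley density satisfies the Von Mises condition for the Gumbel domain of attraction: lim_{x→∞} f'(x)(1 - F(x))/f(x)² = -1. -/
open Real Filter

theorem pseudoLindley_vonMises (θ β : ℝ) (hθ : 0 < θ) (hβ : 1 < β)
    (f S : ℝ → ℝ)
    (hf : ∀ x : ℝ, f x = θ * (β - 1 + θ * x) * Real.exp (-θ * x) / β)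
    (hS : ∀ x : ℝ, S x = (β + θ * x) * Real.exp (-θ * x) / β) :
    Tendsto (fun x => deriv f x * S x / (f x) ^ 2) atTop (nhds (-1)) := by
  have hβ0 : (0:ℝ) < β := lt_trans one_pos hβ
  -- derivative of f
  have hderiv : ∀ x : ℝ, deriv f x = θ ^ 2 * (2 - β - θ * x) * Real.exp (-θ * x) / β := by
    intro x
    have h1 : HasDerivAt (fun x : ℝ => β - 1 + θ * x) θ x := by
      simpa using ((hasDerivAt_id x).const_mul θ).const_add (β - 1)
    have h2 : HasDerivAt (fun x : ℝ => Real.exp (-θ * x)) (-θ * Real.exp (-θ * x)) x := by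
      simpa [mul_comm] using (((hasDerivAt_id x).const_mul (-θ)).exp)
    have h3 : HasDerivAt f (θ ^ 2 * (2 - β - θ * x) * Real.exp (-θ * x) / β) x := by
      have := ((h1.mul h2).const_mul θ).div_const β
      have heq : (fun x : ℝ => θ * ((β - 1 + θ * x) * Real.exp (-θ * x)) / β) = f := by
        funext y; rw [hf y]; ring
      simp only [Pi.mul_apply] at this
      rw [heq] at this
      refine this.congr_deriv ?_
      ring
    exact h3.deriv
  -- eventual equality with rational function
  have hev : ∀ᶠ x in atTop,
      deriv f x * S x / (f x) ^ 2
        = ((2 - β) / x - θ) * (β / x + θ) / ((β - 1) / x + θ) ^ 2 := by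
    filter_upwards [eventually_gt_atTop 0] with x hx
    have hx0 : x ≠ 0 := ne_of_gt hx
    have hd : β - 1 + θ * x ≠ 0 := ne_of_gt (by nlinarith)
    have he : Real.exp (-θ * x) ≠ 0 := Real.exp_ne_zero _
    rw [hderiv, hS, hf]
    field_simp
  rw [tendsto_congr' hev]
  have h0 : Tendsto (fun x : ℝ => x⁻¹) atTop (nhds 0) := tendsto_inv_atTop_zero
  have hc : ContinuousAt (fun u : ℝ => ((2 - β) * u - θ) * (β * u + θ) / ((β - 1) * u + θ) ^ 2) 0 := by
    apply ContinuousAt.div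
    · fun_prop
    · fun_prop
    · simp
      positivity
  have hlim := (hc.tendsto.comp h0)
  have hval : ((2 - β) * 0 - θ) * (β * 0 + θ) / ((β - 1) * 0 + θ) ^ 2 = -1 := by
    field_simp
    rw [div_eq_iff (by positivity)]; ring
  rw [hval] at hlim
  refine hlim.congr (fun x => ?_)
  simp only [Function.comp_apply, div_eq_mul_inv]
end

section
/- For every λ > 0, lim_{u→0⁺} (F^{-1}(1 - λu) - F^{-1}(1 - u))/(1/θ) = -log λ, where F is the Pseudo-Lindley CDF. Hence F belongs to the Gumbel extremal domain of attraction. -/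
open Real Filter

theorem pseudoLindley_gumbel_quantile_limit (θ β : ℝ) (hθ : 0 < θ) (hβ : 1 < β)
    (F : ℝ → ℝ)
    (hF : ∀ x : ℝ, F x = if 0 ≤ x then 1 - (β + θ * x) * Real.exp (-θ * x) / β else 0)
    (Finv : ℝ → ℝ) (hFinv : ∀ v ∈ Set.Ioo (0 : ℝ) 1, Finv v = sInf {x : ℝ | v ≤ F x})
    (l : ℝ) (hl : 0 < l) :
    Tendsto (fun u => (Finv (1 - l * u) - Finv (1 - u)) / (1 / θ))
      (nhdsWithin 0 (Set.Ioi 0)) (nhds (-Real.log l)) := by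
  have hβ0 : (0:ℝ) < β := lt_trans one_pos hβ
  set S : ℝ → ℝ := fun x => (β + θ * x) * Real.exp (-θ * x) / β with hSdef
  -- positivity of S on [0,∞)
  have hSpos : ∀ x : ℝ, 0 ≤ x → 0 < S x := by
    intro x hx
    have h1 : 0 < β + θ * x := by positivity
    have h2 : 0 < Real.exp (-θ * x) := Real.exp_pos _
    positivity
  have hS0 : S 0 = 1 := by
    simp [hSdef, hβ0.ne']
  -- continuity
  have hScont : Continuous S := by
    simp only [hSdef]
    fun_prop
  -- strict antitonicity on [0,∞)
  have hSanti : StrictAntiOn S (Set.Ici 0) := by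
    apply strictAntiOn_of_deriv_neg (convex_Ici 0) hScont.continuousOn
    intro x hx
    rw [interior_Ici] at hx
    have h1 : HasDerivAt (fun y => β + θ * y) θ x := by
      simpa using ((hasDerivAt_id x).const_mul θ).const_add β
    have h2 : HasDerivAt (fun y => Real.exp (-θ * y)) (Real.exp (-θ * x) * (-θ)) x := by
      have := ((hasDerivAt_id x).const_mul (-θ)).exp
      simpa using this
    have hD : HasDerivAt S
        ((θ * Real.exp (-θ * x) + (β + θ * x) * (Real.exp (-θ * x) * (-θ))) / β) x :=
      (h1.mul h2).div_const β
    rw [hD.deriv]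
    have hE : 0 < Real.exp (-θ * x) := Real.exp_pos _
    apply div_neg_of_neg_of_pos _ hβ0
    nlinarith [mul_pos (mul_pos hθ hE) (sub_pos.mpr hβ),
      mul_pos (mul_pos (mul_pos hθ hθ) hx) hE]
  -- S tends to 0 at infinity
  have hStend : Tendsto S atTop (nhds 0) := by
    have hg : Tendsto (fun y : ℝ => (β + y) * Real.exp (-y) / β) atTop (nhds 0) := by
      have h1 : Tendsto (fun y : ℝ => β * Real.exp (-y) + y * Real.exp (-y)) atTop
          (nhds (β * 0 + 0)) := by
        apply Tendsto.add (tendsto_exp_neg_atTop_nhds_zero.const_mul β)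
        simpa using tendsto_pow_mul_exp_neg_atTop_nhds_zero 1
      have h2 := h1.div_const β
      simp only [mul_zero, add_zero, zero_div] at h2
      refine h2.congr (fun y => by ring)
    have hcomp : Tendsto (fun x : ℝ => θ * x) atTop atTop :=
      Tendsto.const_mul_atTop hθ tendsto_id
    have := hg.comp hcomp
    refine this.congr (fun x => ?_)
    simp only [Function.comp, hSdef, neg_mul]
  -- characterization of Finv (1 - u)
  have hchar : ∀ u ∈ Set.Ioo (0:ℝ) 1, 0 < Finv (1 - u) ∧ S (Finv (1 - u)) = u := by
    intro u hu
    obtain ⟨hu0, hu1⟩ := hu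
    -- find a root
    obtain ⟨M, hMu, hM0⟩ :=
      ((hStend.eventually (gt_mem_nhds hu0)).and (eventually_ge_atTop 0)).exists
    have hxex : ∃ x, 0 < x ∧ S x = u := by
      have hsub : Set.Icc (S M) (S 0) ⊆ S '' Set.Icc 0 M :=
        intermediate_value_Icc' hM0 hScont.continuousOn
      have humem : u ∈ Set.Icc (S M) (S 0) := by
        rw [hS0]; exact ⟨hMu.le, hu1.le⟩
      obtain ⟨x, hxmem, hxval⟩ := hsub humem
      refine ⟨x, ?_, hxval⟩
      rcases lt_or_eq_of_le hxmem.1 with h | h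
      · exact h
      · exfalso; rw [← h, hS0] at hxval; exact hu1.ne hxval.symm
    obtain ⟨x, hx0, hxval⟩ := hxex
    have hset : {z : ℝ | 1 - u ≤ F z} = Set.Ici x := by
      ext z
      simp only [Set.mem_setOf_eq, Set.mem_Ici]
      rw [hF z]
      by_cases hz : 0 ≤ z
      · rw [if_pos hz]
        constructor
        · intro h
          have hle : S z ≤ S x := by
            rw [hxval]; simp only [hSdef] at h ⊢; linarith
          exact (hSanti.le_iff_ge hz (le_of_lt hx0)).mp hle
        · intro h
          have hle : S z ≤ S x := (hSanti.le_iff_ge hz (le_of_lt hx0)).mpr h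
          rw [hxval] at hle
          simp only [hSdef] at hle ⊢; linarith
      · rw [if_neg hz]
        constructor
        · intro h; linarith
        · intro h; exfalso; push_neg at hz; linarith
    have hFinvEq : Finv (1 - u) = x := by
      rw [hFinv (1 - u) ⟨by linarith, by linarith⟩, hset, csInf_Ici]
    rw [hFinvEq]
    exact ⟨hx0, hxval⟩
  -- Finv (1 - u) → ∞ as u → 0⁺
  have hxtop : Tendsto (fun u => Finv (1 - u)) (nhdsWithin 0 (Set.Ioi 0)) atTop := by
    rw [tendsto_atTop]
    intro b
    set M := max b 0 with hM
    have hM0 : 0 ≤ M := le_max_right _ _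
    have hSM : 0 < S M := hSpos M hM0
    have hmin : 0 < min 1 (S M) := lt_min one_pos hSM
    filter_upwards [Ioo_mem_nhdsGT_of_mem (Set.left_mem_Ico.2 hmin)] with u hu
    have hu1 : u ∈ Set.Ioo (0:ℝ) 1 := ⟨hu.1, lt_of_lt_of_le hu.2 (min_le_left _ _)⟩
    obtain ⟨hxpos, hxval⟩ := hchar u hu1
    have hlt : S (Finv (1 - u)) < S M := by
      rw [hxval]; exact lt_of_lt_of_le hu.2 (min_le_right _ _)
    have := (hSanti.lt_iff_gt (le_of_lt hxpos) hM0).mp hlt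
    exact le_trans (le_max_left b 0) this.le
  -- submultiplicativity : S (x + c) ≤ S x * S c
  have hsubmul : ∀ x : ℝ, 0 ≤ x → ∀ c : ℝ, 0 ≤ c → S (x + c) ≤ S x * S c := by
    intro x hx c hc
    have hE : 0 < Real.exp (-θ * x) * Real.exp (-θ * c) := by positivity
    have key : S x * S c - S (x + c) =
        θ ^ 2 * x * c * (Real.exp (-θ * x) * Real.exp (-θ * c)) / β ^ 2 := by
      simp only [hSdef]
      rw [show -θ * (x + c) = -θ * x + -θ * c by ring, Real.exp_add]
      field_simp
      ring
    have h0 : 0 ≤ θ ^ 2 * x * c * (Real.exp (-θ * x) * Real.exp (-θ * c)) / β ^ 2 :=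
      div_nonneg (mul_nonneg (mul_nonneg (mul_nonneg (sq_nonneg θ) hx) hc) hE.le)
        (sq_nonneg β)
    linarith [key]
  -- log identity
  have hlogid : ∀ u ∈ Set.Ioo (0:ℝ) 1,
      θ * Finv (1 - u) = Real.log (β + θ * Finv (1 - u)) - Real.log β - Real.log u := by
    intro u hu
    obtain ⟨hxpos, hxval⟩ := hchar u hu
    set x := Finv (1 - u)
    have h1 : 0 < β + θ * x := by positivity
    have hloguu : Real.log u = Real.log (β + θ * x) + (-θ * x) - Real.log β := by
      rw [← hxval]
      simp only [hSdef]
      rw [Real.log_div (by positivity) hβ0.ne', Real.log_mul h1.ne' (Real.exp_pos _).ne',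
        Real.log_exp]
    linarith
  -- choose c with S c < min l l⁻¹
  have hminl : 0 < min l l⁻¹ := lt_min hl (inv_pos.2 hl)
  obtain ⟨c, hcS, hc0⟩ :=
    ((hStend.eventually (gt_mem_nhds hminl)).and (eventually_gt_atTop 0)).exists
  have hcl : S c < l := lt_of_lt_of_le hcS (min_le_left _ _)
  have hcli : S c < l⁻¹ := lt_of_lt_of_le hcS (min_le_right _ _)
  -- the eventual window
  have hε : 0 < min 1 l⁻¹ := lt_min one_pos (inv_pos.2 hl)
  have hwin : Set.Ioo (0:ℝ) (min 1 l⁻¹) ∈ nhdsWithin (0:ℝ) (Set.Ioi 0) :=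
    Ioo_mem_nhdsGT_of_mem (Set.left_mem_Ico.2 hε)
  -- eventual facts
  have hev : ∀ᶠ u in nhdsWithin (0:ℝ) (Set.Ioi 0),
      u ∈ Set.Ioo (0:ℝ) 1 ∧ l * u ∈ Set.Ioo (0:ℝ) 1 ∧
      |Finv (1 - l * u) - Finv (1 - u)| < c := by
    filter_upwards [hwin] with u hu
    have hu0 : 0 < u := hu.1
    have hu1 : u < 1 := lt_of_lt_of_le hu.2 (min_le_left _ _)
    have hui : u < l⁻¹ := lt_of_lt_of_le hu.2 (min_le_right _ _)
    have hlu1 : l * u < 1 := by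
      have := (mul_lt_mul_iff_right₀ hl).2 hui
      rwa [mul_inv_cancel₀ hl.ne'] at this
    have hmem1 : u ∈ Set.Ioo (0:ℝ) 1 := ⟨hu0, hu1⟩
    have hmem2 : l * u ∈ Set.Ioo (0:ℝ) 1 := ⟨by positivity, hlu1⟩
    refine ⟨hmem1, hmem2, ?_⟩
    obtain ⟨hxpos, hxval⟩ := hchar u hmem1
    obtain ⟨hypos, hyval⟩ := hchar (l * u) hmem2
    set x := Finv (1 - u)
    set y := Finv (1 - l * u)
    have h1 : y < x + c := by
      have hb : S (x + c) ≤ S x * S c := hsubmul x hxpos.le c hc0.le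
      have : S (x + c) < S y := by
        rw [hxval] at hb; rw [hyval]
        calc S (x + c) ≤ u * S c := hb
          _ < u * l := by exact (mul_lt_mul_iff_right₀ hu0).2 hcl
          _ = l * u := by ring
      exact (hSanti.lt_iff_gt (Set.mem_Ici.mpr (by linarith)) hypos.le).mp this
    have h2 : x < y + c := by
      have hb : S (y + c) ≤ S y * S c := hsubmul y hypos.le c hc0.le
      have : S (y + c) < S x := by
        rw [hyval] at hb; rw [hxval]
        calc S (y + c) ≤ l * u * S c := hb
          _ < l * u * l⁻¹ :=
            (mul_lt_mul_iff_right₀ (mul_pos hl hu0)).2 hcli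
          _ = u := by field_simp
      exact (hSanti.lt_iff_gt (Set.mem_Ici.mpr (by linarith)) hxpos.le).mp this
    rw [abs_lt]
    constructor <;> linarith
  -- ratio tends to 1
  have hbtop : Tendsto (fun u => β + θ * Finv (1 - u)) (nhdsWithin 0 (Set.Ioi 0)) atTop :=
    tendsto_atTop_add_const_left _ β (Tendsto.const_mul_atTop hθ hxtop)
  have hδ : Tendsto (fun u => θ * c / (β + θ * Finv (1 - u)))
      (nhdsWithin 0 (Set.Ioi 0)) (nhds 0) := by
    have := hbtop.inv_tendsto_atTop
    have h2 := this.const_mul (θ * c)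
    simpa [div_eq_mul_inv] using h2
  have hrat : Tendsto (fun u => (β + θ * Finv (1 - l * u)) / (β + θ * Finv (1 - u)))
      (nhdsWithin 0 (Set.Ioi 0)) (nhds 1) := by
    apply tendsto_of_tendsto_of_tendsto_of_le_of_le'
      (g := fun u => 1 - θ * c / (β + θ * Finv (1 - u)))
      (h := fun u => 1 + θ * c / (β + θ * Finv (1 - u)))
    · simpa using (tendsto_const_nhds.sub hδ)
    · simpa using (tendsto_const_nhds.add hδ)
    · filter_upwards [hev] with u hu
      obtain ⟨hmem1, hmem2, habs⟩ := hu
      obtain ⟨hxpos, -⟩ := hchar u hmem1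
      have hden : 0 < β + θ * Finv (1 - u) := by positivity
      rw [abs_lt] at habs
      have hnum : β + θ * Finv (1 - u) - θ * c ≤ β + θ * Finv (1 - l * u) := by
        nlinarith [mul_pos hθ (show (0:ℝ) < Finv (1 - l * u) - Finv (1 - u) + c by
          linarith [habs.1])]
      have heq : 1 - θ * c / (β + θ * Finv (1 - u))
          = (β + θ * Finv (1 - u) - θ * c) / (β + θ * Finv (1 - u)) := by
        field_simp
      rw [heq]
      gcongr
    · filter_upwards [hev] with u hu
      obtain ⟨hmem1, hmem2, habs⟩ := hu
      obtain ⟨hxpos, -⟩ := hchar u hmem1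
      have hden : 0 < β + θ * Finv (1 - u) := by positivity
      rw [abs_lt] at habs
      have hnum : β + θ * Finv (1 - l * u) ≤ β + θ * Finv (1 - u) + θ * c := by
        nlinarith [mul_pos hθ (show (0:ℝ) < c - (Finv (1 - l * u) - Finv (1 - u)) by
          linarith [habs.2])]
      have heq : 1 + θ * c / (β + θ * Finv (1 - u))
          = (β + θ * Finv (1 - u) + θ * c) / (β + θ * Finv (1 - u)) := by
        field_simp
      rw [heq]
      gcongr
  have hlograt : Tendsto (fun u => Real.log
      ((β + θ * Finv (1 - l * u)) / (β + θ * Finv (1 - u))))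
      (nhdsWithin 0 (Set.Ioi 0)) (nhds 0) := by
    have hcont : ContinuousAt Real.log 1 := Real.continuousAt_log one_ne_zero
    have := hcont.tendsto.comp hrat
    simpa [Function.comp_def] using this
  -- final assembly
  have hfin : Tendsto (fun u => -Real.log l + Real.log
      ((β + θ * Finv (1 - l * u)) / (β + θ * Finv (1 - u))))
      (nhdsWithin 0 (Set.Ioi 0)) (nhds (-Real.log l)) := by
    simpa using tendsto_const_nhds.add hlograt
  apply hfin.congr'
  filter_upwards [hev] with u hu
  obtain ⟨hmem1, hmem2, habs⟩ := hu
  obtain ⟨hxpos, -⟩ := hchar u hmem1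
  obtain ⟨hypos, -⟩ := hchar (l * u) hmem2
  have hdx : 0 < β + θ * Finv (1 - u) := by positivity
  have hdy : 0 < β + θ * Finv (1 - l * u) := by positivity
  have hid1 := hlogid u hmem1
  have hid2 := hlogid (l * u) hmem2
  have hloglu : Real.log (l * u) = Real.log l + Real.log u :=
    Real.log_mul hl.ne' hmem1.1.ne'
  rw [hloglu] at hid2
  rw [Real.log_div hdy.ne' hdx.ne', div_div_eq_mul_div, div_one]
  linarith [hid1, hid2]
end

section
/- As u → 0⁺, F^{-1}(1 - u) = θ^{-1} log(1/u) · (1 + o(1)), i.e., lim_{u→0⁺} F^{-1}(1 - u)/(θ^{-1} log(1/u)) = 1, for the Pseudo-Lindley quantile function. -/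
open Real Filter

set_option maxHeartbeats 1000000

theorem pseudoLindley_quantile_firstOrder (θ β : ℝ) (hθ : 0 < θ) (hβ : 1 < β)
    (F : ℝ → ℝ)
    (hF : ∀ x : ℝ, F x = if 0 ≤ x then 1 - (β + θ * x) * Real.exp (-θ * x) / β else 0)
    (Finv : ℝ → ℝ) (hFinv : ∀ v ∈ Set.Ioo (0 : ℝ) 1, Finv v = sInf {x : ℝ | v ≤ F x}) :
    Tendsto (fun u => Finv (1 - u) / (θ⁻¹ * Real.log (1 / u)))
      (nhdsWithin 0 (Set.Ioi 0)) (nhds 1) := by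
  have hβ0 : (0:ℝ) < β := by linarith
  rw [Metric.tendsto_nhds]
  intro ε hε
  set ε' : ℝ := min (ε/2) (1/2) with hε'def
  have hε'pos : 0 < ε' := lt_min (by linarith) one_half_pos
  have hε'lt1 : ε' < 1 := lt_of_le_of_lt (min_le_right _ _) (by norm_num)
  have hε'ltε : ε' < ε := lt_of_le_of_lt (min_le_left _ _) (by linarith)
  -- log(1/u) → ∞
  have hL : Tendsto (fun u : ℝ => Real.log (1/u)) (nhdsWithin 0 (Set.Ioi 0)) atTop := by
    simp only [one_div, Real.log_inv]
    exact tendsto_neg_atBot_atTop.comp Real.tendsto_log_nhdsGT_zero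
  -- (β + (1+ε')t) e^{-ε' t} → 0
  have hmul : Tendsto (fun t : ℝ => ε' * t) atTop atTop :=
    Tendsto.const_mul_atTop hε'pos tendsto_id
  have hexp0 : Tendsto (fun t : ℝ => Real.exp (-(ε' * t))) atTop (nhds 0) :=
    Real.tendsto_exp_neg_atTop_nhds_zero.comp hmul
  have htexp : Tendsto (fun t : ℝ => t * Real.exp (-(ε' * t))) atTop (nhds 0) := by
    have h1 : Tendsto (fun t : ℝ => (ε' * t) ^ 1 * Real.exp (-(ε' * t))) atTop (nhds 0) :=
      (tendsto_pow_mul_exp_neg_atTop_nhds_zero 1).comp hmul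
    have h2 : Tendsto (fun t : ℝ => ε'⁻¹ * ((ε' * t) ^ 1 * Real.exp (-(ε' * t)))) atTop
        (nhds (ε'⁻¹ * 0)) := h1.const_mul _
    rw [mul_zero] at h2
    refine h2.congr fun t => ?_
    field_simp
  have hg : Tendsto (fun t : ℝ => (β + (1 + ε') * t) * Real.exp (-(ε' * t))) atTop (nhds 0) := by
    have := ((hexp0.const_mul β).add (htexp.const_mul (1 + ε')))
    rw [mul_zero, mul_zero, add_zero] at this
    refine this.congr fun t => by ring
  have h3ev : ∀ᶠ u in nhdsWithin (0:ℝ) (Set.Ioi 0),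
      (β + (1 + ε') * Real.log (1/u)) * Real.exp (-(ε' * Real.log (1/u))) < β :=
    (hg.comp hL).eventually_lt_const hβ0
  have h1ev : ∀ᶠ u in nhdsWithin (0:ℝ) (Set.Ioi 0), u < 1 :=
    eventually_nhdsWithin_of_eventually_nhds (gt_mem_nhds one_pos)
  filter_upwards [self_mem_nhdsWithin, h1ev, h3ev] with u hu hu1 h3
  have hu0 : 0 < u := hu
  set L : ℝ := Real.log (1/u) with hLdef
  have hL0 : 0 < L := Real.log_pos (one_lt_one_div hu0 hu1)
  have hlogu : Real.log u = -L := by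
    rw [hLdef, one_div, Real.log_inv]; ring
  set D : ℝ := θ⁻¹ * L with hDdef
  have hD : 0 < D := mul_pos (inv_pos.2 hθ) hL0
  set b : ℝ := (1 + ε') * D with hbdef
  set a : ℝ := (1 - ε') * D with hadef
  have hb0 : 0 ≤ b := le_of_lt (mul_pos (by linarith) hD)
  have ha0 : 0 ≤ a := le_of_lt (mul_pos (by linarith) hD)
  have hθb : θ * b = (1 + ε') * L := by
    rw [hbdef, hDdef]; field_simp
  have hθa : θ * a = (1 - ε') * L := by
    rw [hadef, hDdef]; field_simp
  have hexpb : Real.exp (-θ * b) = u * Real.exp (-(ε' * L)) := by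
    have : -θ * b = Real.log u + (-(ε' * L)) := by rw [hlogu]; linarith [hθb]
    rw [this, Real.exp_add, Real.exp_log hu0]
  -- b is in the set
  have hmem_b : (1:ℝ) - u ≤ F b := by
    rw [hF b, if_pos hb0]
    have hkey : (β + θ * b) * Real.exp (-θ * b) / β ≤ u := by
      rw [div_le_iff₀ hβ0, hθb, hexpb]
      nlinarith [mul_lt_mul_of_pos_left h3 hu0, Real.exp_pos (-(ε' * L))]
    linarith
  have hFinv_eq : Finv (1 - u) = sInf {x : ℝ | 1 - u ≤ F x} :=
    hFinv _ ⟨by linarith, by linarith⟩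
  -- elements of the set are nonnegative
  have hnonneg : ∀ x ∈ {x : ℝ | 1 - u ≤ F x}, 0 ≤ x := by
    intro x hx
    by_contra h
    push_neg at h
    rw [Set.mem_setOf_eq, hF x, if_neg (not_le.2 h)] at hx
    linarith
  have hbdd : BddBelow {x : ℝ | 1 - u ≤ F x} := ⟨0, hnonneg⟩
  have hupper : sInf {x : ℝ | 1 - u ≤ F x} ≤ b := csInf_le hbdd hmem_b
  have hlower : a ≤ sInf {x : ℝ | 1 - u ≤ F x} := by
    refine le_csInf ⟨b, hmem_b⟩ fun x hx => ?_
    by_contra h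
    push_neg at h
    have hx0 : 0 ≤ x := hnonneg x hx
    rw [Set.mem_setOf_eq, hF x, if_pos hx0] at hx
    have hsurv : (β + θ * x) * Real.exp (-θ * x) / β ≤ u := by linarith
    have h4 : Real.exp (-θ * x) ≤ (β + θ * x) * Real.exp (-θ * x) / β := by
      rw [le_div_iff₀ hβ0]
      nlinarith [Real.exp_pos (-θ * x), mul_nonneg hθ.le hx0]
    have h5 : Real.exp (-θ * a) ≤ Real.exp (-θ * x) := by
      apply Real.exp_le_exp.2
      nlinarith [mul_pos hθ (sub_pos.2 h)]
    have h6 : u < Real.exp (-θ * a) := by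
      have hlt : Real.log u < -θ * a := by
        rw [hlogu]; nlinarith [hθa, mul_pos hε'pos hL0]
      calc u = Real.exp (Real.log u) := (Real.exp_log hu0).symm
        _ < Real.exp (-θ * a) := Real.exp_lt_exp.2 hlt
    linarith
  -- conclude
  rw [Real.dist_eq, hFinv_eq]
  have hub : sInf {x : ℝ | 1 - u ≤ F x} / D ≤ 1 + ε' := by
    rw [div_le_iff₀ hD]
    calc sInf {x : ℝ | 1 - u ≤ F x} ≤ b := hupper
      _ = (1 + ε') * D := hbdef
  have hlb : 1 - ε' ≤ sInf {x : ℝ | 1 - u ≤ F x} / D := by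
    rw [le_div_iff₀ hD]
    calc (1 - ε') * D = a := hadef.symm
      _ ≤ _ := hlower
  rw [abs_lt]
  constructor <;> [nlinarith; nlinarith]
end
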